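/- Let A, B be matrices (or bounded operators), u: [0,T] → ℝ piecewise constant, Υ_t the propagator of ψ' = (A + u(t)B)ψ and X(t,s) the propagator of the compressed system x' = (π_N A π_N + u π_N B π_N)x, with X(t,s) unitary. Then for any ψ₀, π_N Υ_t ψ₀ = X(t,0)π_N ψ₀ + ∫₀^t u(s) X(t,s) π_N B (Id − π_N) Υ_s ψ₀ ds. -/

import Mathlib

open MeasureTheory Set intervalIntegral

lemma II_smul_cont {E : Type*} [NormedAddCommGroup E] [NormedSpace ℝ E]
    {τ : ℝ} (hτ : 0 ≤ τ) {a : ℝ → ℝ} (ha : IntervalIntegrable a volume 0 τ)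
    {f : ℝ → E} (hf : ContinuousOn f (Set.Icc 0 τ)) :
    IntervalIntegrable (fun s => a s • f s) volume 0 τ := by
  rw [intervalIntegrable_iff_integrableOn_Ioc_of_le hτ]
  obtain ⟨C, hC⟩ := (isCompact_Icc (a := (0:ℝ)) (b := τ)).exists_bound_of_continuousOn hf
  have hmes : AEStronglyMeasurable (fun s => a s • f s) (volume.restrict (Ioc 0 τ)) := by
    have ha' : AEStronglyMeasurable a (volume.restrict (Ioc 0 τ)) := by
      have := ha.def'.1
      rwa [uIoc_of_le hτ] at this
    exact ha'.smul ((hf.mono Ioc_subset_Icc_self).aestronglyMeasurable measurableSet_Ioc)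
  have hint : Integrable (fun s => |a s| * C) (volume.restrict (Ioc 0 τ)) := by
    have := ha.abs.def'
    rw [uIoc_of_le hτ] at this
    exact this.mul_const C
  refine hint.mono' hmes ?_
  filter_upwards [ae_restrict_mem measurableSet_Ioc] with x hx
  rw [norm_smul, Real.norm_eq_abs]
  exact mul_le_mul_of_nonneg_left (hC x (Ioc_subset_Icc_self hx)) (abs_nonneg _)

lemma II_mul_cont {τ : ℝ} (hτ : 0 ≤ τ) {a : ℝ → ℝ} (ha : IntervalIntegrable a volume 0 τ)
    {g : ℝ → ℝ} (hg : ContinuousOn g (Set.Icc 0 τ)) :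
    IntervalIntegrable (fun s => a s * g s) volume 0 τ :=
  II_smul_cont hτ ha hg

lemma II_sub_interval {E : Type*} [NormedAddCommGroup E]
    {τ : ℝ} {f : ℝ → E} (hf : IntervalIntegrable f volume 0 τ)
    {p q : ℝ} (hp : 0 ≤ p) (hpq : p ≤ q) (hq : q ≤ τ) :
    IntervalIntegrable f volume p q := by
  refine hf.mono_set ?_
  rw [uIcc_of_le (hp.trans (hpq.trans hq)), uIcc_of_le hpq]
  exact Icc_subset_Icc hp hq

lemma II_range {E : Type*} [NormedAddCommGroup E]
    {T : ℝ} (hT : 0 ≤ T) {f : ℝ → E} (hf : IntervalIntegrable f volume 0 T)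
    {p q : ℝ} (hp : p ∈ Set.Icc (0:ℝ) T) (hq : q ∈ Set.Icc (0:ℝ) T) :
    IntervalIntegrable f volume p q :=
  hf.mono_set (Set.uIcc_subset_uIcc (by rw [Set.uIcc_of_le hT]; exact hp)
    (by rw [Set.uIcc_of_le hT]; exact hq))

/-- Grönwall inequality, integral form, with L¹ coefficient. -/
lemma my_gronwall {T : ℝ} (hT : 0 ≤ T) {a : ℝ → ℝ}
    (ha : IntervalIntegrable a volume 0 T) (ha0 : ∀ r, 0 ≤ a r) :
    ∃ Q : ℝ, 0 ≤ Q ∧ ∀ c : ℝ, 0 ≤ c → ∀ τ ∈ Set.Icc (0:ℝ) T, ∀ g : ℝ → ℝ,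
      ContinuousOn g (Set.Icc 0 τ) → (∀ t ∈ Set.Icc 0 τ, 0 ≤ g t) →
      (∀ t ∈ Set.Icc 0 τ, g t ≤ c + ∫ s in (0:ℝ)..t, a s * g s) →
      ∀ t ∈ Set.Icc 0 τ, g t ≤ c * Q := by
  classical
  set A0 : ℝ → ℝ := fun t => ∫ s in (0:ℝ)..t, a s with hA0def
  have hA0cont : ContinuousOn A0 (Set.Icc 0 T) := by
    have := continuousOn_primitive_interval' ha (left_mem_uIcc (a := (0:ℝ)) (b := T))
    rwa [uIcc_of_le hT] at this
  -- difference of primitive = interval integral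
  have hA0diff : ∀ p q : ℝ, 0 ≤ p → p ≤ q → q ≤ T →
      A0 q - A0 p = ∫ s in p..q, a s := by
    intro p q hp hpq hq
    rw [hA0def]
    exact integral_interval_sub_left (II_sub_interval ha le_rfl (hp.trans hpq) hq)
      (II_sub_interval ha le_rfl hp (hpq.trans hq))
  set K := A0 T with hKdef
  have hK0 : 0 ≤ K := by
    have := hA0diff 0 T le_rfl hT le_rfl
    have h0 : A0 0 = 0 := integral_same
    have hnn : 0 ≤ ∫ s in (0:ℝ)..T, a s :=
      integral_nonneg hT (fun s _ => ha0 s)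
    rw [h0] at this; linarith
  -- uniform continuity of the primitive
  obtain ⟨δ, hδ, hmod⟩ := Metric.uniformContinuousOn_iff.mp
    (isCompact_Icc.uniformContinuousOn_of_continuous hA0cont) (1/2) (by norm_num)
  set δ' : ℝ := δ / 2 with hδ'def
  have hδ' : 0 < δ' := by positivity
  set n : ℕ := ⌈T / δ'⌉₊ with hndef
  set Q : ℕ → ℝ := fun i => Nat.rec 1 (fun _ q => 2 + 2 * (1 + K) * q) i with hQdef
  have hQsucc : ∀ i, Q (i + 1) = 2 + 2 * (1 + K) * Q i := fun i => rfl
  have hQpos : ∀ i, 1 ≤ Q i := by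
    intro i; induction i with
    | zero => exact le_refl 1
    | succ i ih => rw [hQsucc]; nlinarith
  have hQmono : ∀ i, Q i ≤ Q (i + 1) := by
    intro i; rw [hQsucc]; nlinarith [hQpos i]
  refine ⟨Q n, le_trans zero_le_one (hQpos n), ?_⟩
  intro c hc τ hτ g hg hg0 hle
  have hτT := hτ.2
  have hτ0 := hτ.1
  have haτ : IntervalIntegrable a volume 0 τ := II_sub_interval ha le_rfl hτ0 hτT
  have hag : IntervalIntegrable (fun s => a s * g s) volume 0 τ := II_mul_cont hτ0 haτ hg
  have key : ∀ i : ℕ, ∀ t ∈ Set.Icc (0:ℝ) τ, t ≤ (i : ℝ) * δ' → g t ≤ c * Q i := by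
    intro i
    induction i with
    | zero =>
      intro t ht hti
      simp only [Nat.cast_zero, zero_mul] at hti
      have ht0 : t = 0 := le_antisymm hti ht.1
      have := hle t ht
      rw [ht0] at this ⊢
      rw [integral_same] at this
      have : g 0 ≤ c := by linarith
      calc g 0 ≤ c := this
        _ = c * 1 := (mul_one c).symm
        _ ≤ c * Q 0 := le_refl _
    | succ i IH =>
      intro t ht hti
      set m := min (((i : ℝ) + 1) * δ') τ with hmdef
      have hm0 : 0 ≤ m := le_min (by positivity) hτ0
      obtain ⟨t', ht'S, hmax⟩ := isCompact_Icc.exists_isMaxOn (nonempty_Icc.mpr hm0)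
        (hg.mono (Icc_subset_Icc le_rfl (min_le_right _ _)))
      have htS : t ∈ Set.Icc 0 m := ⟨ht.1, le_min (by push_cast at hti ⊢; linarith) ht.2⟩
      have hgt : g t ≤ g t' := hmax htS
      have ht'τ : t' ∈ Set.Icc (0:ℝ) τ := ⟨ht'S.1, le_trans ht'S.2 (min_le_right _ _)⟩
      have hcQouter : c * Q i ≤ c * Q (i + 1) := mul_le_mul_of_nonneg_left (hQmono i) hc
      by_cases hcase : t' ≤ (i : ℝ) * δ'
      · exact le_trans hgt (le_trans (IH t' ht'τ hcase) hcQouter)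
      · push_neg at hcase
        set p := (i : ℝ) * δ' with hpdef
        have hp0 : 0 ≤ p := by positivity
        have hpτ : p ≤ τ := le_trans hcase.le ht'τ.2
        have hgt'0 : 0 ≤ g t' := hg0 t' ht'τ
        have h1 : IntervalIntegrable (fun s => a s * g s) volume 0 p :=
          II_sub_interval hag le_rfl hp0 hpτ
        have h2 : IntervalIntegrable (fun s => a s * g s) volume p t' :=
          II_sub_interval hag hp0 hcase.le ht'τ.2
        have hsplit : ∫ s in (0:ℝ)..t', a s * g s
            = (∫ s in (0:ℝ)..p, a s * g s) + ∫ s in p..t', a s * g s :=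
          (integral_add_adjacent_intervals h1 h2).symm
        -- first piece
        have hap : IntervalIntegrable a volume 0 p := II_sub_interval haτ le_rfl hp0 hpτ
        have hb1 : (∫ s in (0:ℝ)..p, a s * g s) ≤ c * Q i * K := by
          have hmono1 : (∫ s in (0:ℝ)..p, a s * g s) ≤ ∫ s in (0:ℝ)..p, a s * (c * Q i) := by
            refine integral_mono_on hp0 h1 (hap.mul_const _) ?_
            intro s hs
            exact mul_le_mul_of_nonneg_left
              (IH s ⟨hs.1, le_trans hs.2 hpτ⟩ hs.2) (ha0 s)
          have heq : (∫ s in (0:ℝ)..p, a s * (c * Q i)) = A0 p * (c * Q i) := by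
            rw [intervalIntegral.integral_mul_const]
          have hA0p : A0 p ≤ K := by
            have := hA0diff p T hp0 (hpτ.trans hτT) le_rfl
            have hnn : 0 ≤ ∫ s in p..T, a s :=
              integral_nonneg (hpτ.trans hτT) (fun s _ => ha0 s)
            rw [hKdef]; linarith
          have hcQ : 0 ≤ c * Q i := mul_nonneg hc (le_trans zero_le_one (hQpos i))
          calc (∫ s in (0:ℝ)..p, a s * g s) ≤ A0 p * (c * Q i) := by rw [← heq]; exact hmono1
            _ ≤ K * (c * Q i) := mul_le_mul_of_nonneg_right hA0p hcQ
            _ = c * Q i * K := by ring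
        -- second piece
        have hb2 : (∫ s in p..t', a s * g s) ≤ 1/2 * g t' := by
          have hmono2 : (∫ s in p..t', a s * g s) ≤ ∫ s in p..t', a s * g t' := by
            refine integral_mono_on hcase.le h2 ((II_sub_interval haτ hp0 hcase.le ht'τ.2).mul_const _) ?_
            intro s hs
            refine mul_le_mul_of_nonneg_left (hmax ⟨le_trans hp0 hs.1, le_trans hs.2 ht'S.2⟩) (ha0 s)
          have heq : (∫ s in p..t', a s * g t') = (A0 t' - A0 p) * g t' := by
            rw [intervalIntegral.integral_mul_const, hA0diff p t' hp0 hcase.le (ht'τ.2.trans hτT)]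
          have hhalf : A0 t' - A0 p ≤ 1/2 := by
            have hdist : dist t' p < δ := by
              have ht'm : t' ≤ ((i:ℝ) + 1) * δ' := le_trans ht'S.2 (min_le_left _ _)
              rw [Real.dist_eq, abs_of_nonneg (by linarith [hcase] : (0:ℝ) ≤ t' - p)]
              have : t' - p ≤ δ' := by rw [hpdef] at *; push_cast at ht'm ⊢; linarith
              linarith
            have := hmod t' ⟨ht'τ.1, ht'τ.2.trans hτT⟩ p ⟨hp0, hpτ.trans hτT⟩ hdist
            rw [Real.dist_eq] at this
            calc A0 t' - A0 p ≤ |A0 t' - A0 p| := le_abs_self _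
              _ ≤ 1/2 := this.le
          calc (∫ s in p..t', a s * g s) ≤ (A0 t' - A0 p) * g t' := by rw [← heq]; exact hmono2
            _ ≤ 1/2 * g t' := mul_le_mul_of_nonneg_right hhalf hgt'0
        have hlet' := hle t' ht'τ
        rw [hsplit] at hlet'
        have hcQ : 0 ≤ c * Q i := mul_nonneg hc (le_trans zero_le_one (hQpos i))
        have hgt'le : g t' ≤ 2 * c + 2 * (c * Q i * K) := by linarith
        calc g t ≤ g t' := hgt
          _ ≤ 2 * c + 2 * (c * Q i * K) := hgt'le
          _ ≤ c * Q (i + 1) := by rw [hQsucc]; nlinarith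
  intro t htτ
  refine key n t htτ ?_
  have hTn : T ≤ (n : ℝ) * δ' := by
    have h1 : T / δ' ≤ (n : ℝ) := Nat.le_ceil (T / δ')
    calc T = (T / δ') * δ' := by field_simp
      _ ≤ (n : ℝ) * δ' := mul_le_mul_of_nonneg_right h1 hδ'.le
  exact le_trans (le_trans htτ.2 hτ.2) hTn

section XL
variable {H : Type*} [NormedAddCommGroup H] [InnerProductSpace ℂ H] [CompleteSpace H]

/-- coefficient bound function -/
noncomputable def aa (A B P : H →L[ℂ] H) (u : ℝ → ℝ) : ℝ → ℝ :=
  fun r => ‖P ∘L A ∘L P‖ + ‖P ∘L B ∘L P‖ * |u r|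

lemma aa_nonneg (A B P : H →L[ℂ] H) (u : ℝ → ℝ) (r : ℝ) : 0 ≤ aa A B P u r := by
  unfold aa; positivity

lemma aa_II (A B P : H →L[ℂ] H) {u : ℝ → ℝ} {T : ℝ} (hu : IntervalIntegrable u volume 0 T) :
    IntervalIntegrable (aa A B P u) volume 0 T := by
  unfold aa
  exact (_root_.intervalIntegrable_const).add (hu.abs.const_mul _)

lemma aa_II' (A B P : H →L[ℂ] H) {u : ℝ → ℝ} {T : ℝ} (hT : 0 ≤ T)
    (hu : IntervalIntegrable u volume 0 T) {s t : ℝ}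
    (hs : s ∈ Set.Icc 0 T) (ht : t ∈ Set.Icc 0 T) :
    IntervalIntegrable (aa A B P u) volume s t := by
  refine (aa_II A B P hu).mono_set (uIcc_subset_uIcc ?_ ?_) <;>
    rw [uIcc_of_le hT] <;> assumption

lemma norm_Lap_le (A B P : H →L[ℂ] H) (u : ℝ → ℝ) (r : ℝ) (ψ : H) :
    ‖(P ∘L A ∘L P) ψ + u r • (P ∘L B ∘L P) ψ‖ ≤ aa A B P u r * ‖ψ‖ := by
  calc ‖(P ∘L A ∘L P) ψ + u r • (P ∘L B ∘L P) ψ‖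
      ≤ ‖(P ∘L A ∘L P) ψ‖ + ‖u r • (P ∘L B ∘L P) ψ‖ := norm_add_le _ _
    _ ≤ ‖P ∘L A ∘L P‖ * ‖ψ‖ + |u r| * (‖P ∘L B ∘L P‖ * ‖ψ‖) := by
        refine add_le_add ((P ∘L A ∘L P).le_opNorm ψ) ?_
        rw [norm_smul, Real.norm_eq_abs]
        exact mul_le_mul_of_nonneg_left ((P ∘L B ∘L P).le_opNorm ψ) (abs_nonneg _)
    _ = aa A B P u r * ‖ψ‖ := by unfold aa; ring

variable {A B P : H →L[ℂ] H} {u : ℝ → ℝ} {T : ℝ} {X : ℝ → ℝ → (H →L[ℂ] H)}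

lemma X_dist (hT : 0 ≤ T) (hu : IntervalIntegrable u volume 0 T)
    (hXunit : ∀ t s : ℝ, ∀ ψ : H, ‖X t s ψ‖ = ‖ψ‖)
    (hX : ∀ s : ℝ, ∀ ψ : H, ∀ t ∈ Set.Icc (0:ℝ) T,
      X t s ψ = ψ + ∫ r in s..t,
        ((P ∘L A ∘L P) (X r s ψ) + u r • (P ∘L B ∘L P) (X r s ψ)))
    {t s : ℝ} (ht : t ∈ Set.Icc (0:ℝ) T) (hs : s ∈ Set.Icc (0:ℝ) T) (ψ : H) :
    ‖X t s ψ - ψ‖ ≤ ‖ψ‖ * |∫ r in s..t, aa A B P u r| := by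
  have hrw : X t s ψ - ψ = ∫ r in s..t,
      ((P ∘L A ∘L P) (X r s ψ) + u r • (P ∘L B ∘L P) (X r s ψ)) := by
    rw [hX s ψ t ht]; abel
  rw [hrw]
  by_cases hI : IntervalIntegrable
      (fun r => (P ∘L A ∘L P) (X r s ψ) + u r • (P ∘L B ∘L P) (X r s ψ)) volume s t
  · have hb : IntervalIntegrable (fun r => aa A B P u r * ‖ψ‖) volume s t :=
      (aa_II' A B P hT hu hs ht).mul_const _
    have := intervalIntegral.norm_integral_le_abs_of_norm_le (μ := volume) (f := fun r =>
        (P ∘L A ∘L P) (X r s ψ) + u r • (P ∘L B ∘L P) (X r s ψ))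
      (a := s) (b := t) (g := fun r => aa A B P u r * ‖ψ‖)
      (Filter.Eventually.of_forall (fun r => by
        calc ‖(P ∘L A ∘L P) (X r s ψ) + u r • (P ∘L B ∘L P) (X r s ψ)‖
            ≤ aa A B P u r * ‖X r s ψ‖ := norm_Lap_le A B P u r (X r s ψ)
          _ = aa A B P u r * ‖ψ‖ := by rw [hXunit])) hb
    calc ‖∫ r in s..t, ((P ∘L A ∘L P) (X r s ψ) + u r • (P ∘L B ∘L P) (X r s ψ))‖
        ≤ |∫ r in s..t, aa A B P u r * ‖ψ‖| := this
      _ = |(∫ r in s..t, aa A B P u r) * ‖ψ‖| := by rw [intervalIntegral.integral_mul_const]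
      _ = |∫ r in s..t, aa A B P u r| * ‖ψ‖ := by rw [abs_mul, abs_of_nonneg (norm_nonneg ψ)]
      _ = ‖ψ‖ * |∫ r in s..t, aa A B P u r| := mul_comm _ _
  · rw [integral_undef hI]
    simp only [norm_zero]
    positivity

lemma X_snd (hT : 0 ≤ T) (hu : IntervalIntegrable u volume 0 T)
    (hXunit : ∀ t s : ℝ, ∀ ψ : H, ‖X t s ψ‖ = ‖ψ‖)
    (hXcoc : ∀ t s r : ℝ, (X t s) ∘L (X s r) = X t r)
    (hX : ∀ s : ℝ, ∀ ψ : H, ∀ t ∈ Set.Icc (0:ℝ) T,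
      X t s ψ = ψ + ∫ r in s..t,
        ((P ∘L A ∘L P) (X r s ψ) + u r • (P ∘L B ∘L P) (X r s ψ)))
    {s s' : ℝ} (hs : s ∈ Set.Icc (0:ℝ) T) (hs' : s' ∈ Set.Icc (0:ℝ) T)
    (t : ℝ) (ψ : H) :
    ‖X t s ψ - X t s' ψ‖ ≤ ‖ψ‖ * |∫ r in s..s', aa A B P u r| := by
  have h1 : X t s ψ = X t s' (X s' s ψ) := by
    rw [← hXcoc t s' s]; rfl
  have h2 : X t s ψ - X t s' ψ = X t s' (X s' s ψ - ψ) := by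
    rw [map_sub, ← h1]
  rw [h2, hXunit]
  exact X_dist hT hu hXunit hX hs' hs ψ

lemma X_fst (hT : 0 ≤ T) (hu : IntervalIntegrable u volume 0 T)
    (hXunit : ∀ t s : ℝ, ∀ ψ : H, ‖X t s ψ‖ = ‖ψ‖)
    (hXcoc : ∀ t s r : ℝ, (X t s) ∘L (X s r) = X t r)
    (hX : ∀ s : ℝ, ∀ ψ : H, ∀ t ∈ Set.Icc (0:ℝ) T,
      X t s ψ = ψ + ∫ r in s..t,
        ((P ∘L A ∘L P) (X r s ψ) + u r • (P ∘L B ∘L P) (X r s ψ)))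
    {t t' : ℝ} (ht : t ∈ Set.Icc (0:ℝ) T) (ht' : t' ∈ Set.Icc (0:ℝ) T)
    (s : ℝ) (ψ : H) :
    ‖X t s ψ - X t' s ψ‖ ≤ ‖ψ‖ * |∫ r in t'..t, aa A B P u r| := by
  have h1 : X t s ψ = X t t' (X t' s ψ) := by rw [← hXcoc t t' s]; rfl
  rw [h1]
  have := X_dist hT hu hXunit hX ht ht' (X t' s ψ)
  rwa [hXunit t' s ψ] at this

end XL

section XC
variable {H : Type*} [NormedAddCommGroup H] [InnerProductSpace ℂ H] [CompleteSpace H]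
variable {A B P : H →L[ℂ] H} {u : ℝ → ℝ} {T : ℝ} {X : ℝ → ℝ → (H →L[ℂ] H)}

lemma X_joint_cont (hT : 0 ≤ T) (hu : IntervalIntegrable u volume 0 T)
    (hXunit : ∀ t s : ℝ, ∀ ψ : H, ‖X t s ψ‖ = ‖ψ‖)
    (hXcoc : ∀ t s r : ℝ, (X t s) ∘L (X s r) = X t r)
    (hX : ∀ s : ℝ, ∀ ψ : H, ∀ t ∈ Set.Icc (0:ℝ) T,
      X t s ψ = ψ + ∫ r in s..t,
        ((P ∘L A ∘L P) (X r s ψ) + u r • (P ∘L B ∘L P) (X r s ψ)))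
    {φ : ℝ → H} (hφ : ContinuousOn φ (Set.Icc 0 T)) :
    ContinuousOn (fun p : ℝ × ℝ => X p.1 p.2 (φ p.2)) (Set.Icc 0 T ×ˢ Set.Icc 0 T) := by
  set A0 : ℝ → ℝ := fun t => ∫ r in (0:ℝ)..t, aa A B P u r with hA0
  have h0T : (0:ℝ) ∈ Set.Icc (0:ℝ) T := ⟨le_rfl, hT⟩
  have hA0cont : ContinuousOn A0 (Set.Icc 0 T) := by
    have := continuousOn_primitive_interval' (aa_II A B P hu)
      (left_mem_uIcc (a := (0:ℝ)) (b := T))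
    rwa [uIcc_of_le hT] at this
  have hdiff : ∀ p q : ℝ, p ∈ Set.Icc (0:ℝ) T → q ∈ Set.Icc (0:ℝ) T →
      (∫ r in p..q, aa A B P u r) = A0 q - A0 p := by
    intro p q hp hq
    rw [hA0]
    exact (integral_interval_sub_left (aa_II' A B P hT hu h0T hq)
      (aa_II' A B P hT hu h0T hp)).symm
  intro p₀ hp₀
  obtain ⟨hp1, hp2⟩ := Set.mem_prod.mp hp₀
  set β : ℝ × ℝ → ℝ := fun p =>
    ‖φ p.2 - φ p₀.2‖ + ‖φ p₀.2‖ * |A0 p.2 - A0 p₀.2| + ‖φ p₀.2‖ * |A0 p.1 - A0 p₀.1|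
    with hβ
  have hβcont : ContinuousWithinAt β (Set.Icc 0 T ×ˢ Set.Icc 0 T) p₀ := by
    have hsnd : ContinuousOn (fun p : ℝ × ℝ => φ p.2) (Set.Icc 0 T ×ˢ Set.Icc 0 T) :=
      hφ.comp continuous_snd.continuousOn (fun p hp => (Set.mem_prod.mp hp).2)
    have hA0snd : ContinuousOn (fun p : ℝ × ℝ => A0 p.2) (Set.Icc 0 T ×ˢ Set.Icc 0 T) :=
      hA0cont.comp continuous_snd.continuousOn (fun p hp => (Set.mem_prod.mp hp).2)
    have hA0fst : ContinuousOn (fun p : ℝ × ℝ => A0 p.1) (Set.Icc 0 T ×ˢ Set.Icc 0 T) :=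
      hA0cont.comp continuous_fst.continuousOn (fun p hp => (Set.mem_prod.mp hp).1)
    exact (((hsnd.sub continuousOn_const).norm.add
      (continuousOn_const.mul ((hA0snd.sub continuousOn_const).abs))).add
      (continuousOn_const.mul ((hA0fst.sub continuousOn_const).abs))) p₀ hp₀
  have hβ0 : β p₀ = 0 := by simp [hβ]
  have hβtendsto : Filter.Tendsto β (nhdsWithin p₀ (Set.Icc 0 T ×ˢ Set.Icc 0 T)) (nhds 0) := by
    have := hβcont.tendsto
    rwa [hβ0] at this
  rw [ContinuousWithinAt, tendsto_iff_norm_sub_tendsto_zero]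
  refine squeeze_zero' (Filter.Eventually.of_forall (fun p => norm_nonneg _)) ?_ hβtendsto
  filter_upwards [self_mem_nhdsWithin] with p hp
  obtain ⟨hq1, hq2⟩ := Set.mem_prod.mp hp
  have key : X p.1 p.2 (φ p.2) - X p₀.1 p₀.2 (φ p₀.2)
      = (X p.1 p.2 (φ p.2) - X p.1 p.2 (φ p₀.2))
        + (X p.1 p.2 (φ p₀.2) - X p.1 p₀.2 (φ p₀.2))
        + (X p.1 p₀.2 (φ p₀.2) - X p₀.1 p₀.2 (φ p₀.2)) := by abel
  rw [key]
  have h1 : ‖X p.1 p.2 (φ p.2) - X p.1 p.2 (φ p₀.2)‖ = ‖φ p.2 - φ p₀.2‖ := by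
    rw [← map_sub, hXunit]
  have h2 : ‖X p.1 p.2 (φ p₀.2) - X p.1 p₀.2 (φ p₀.2)‖
      ≤ ‖φ p₀.2‖ * |A0 p.2 - A0 p₀.2| := by
    have := X_snd hT hu hXunit hXcoc hX hq2 hp2 p.1 (φ p₀.2)
    rwa [hdiff p.2 p₀.2 hq2 hp2, abs_sub_comm] at this
  have h3 : ‖X p.1 p₀.2 (φ p₀.2) - X p₀.1 p₀.2 (φ p₀.2)‖
      ≤ ‖φ p₀.2‖ * |A0 p.1 - A0 p₀.1| := by
    have := X_fst hT hu hXunit hXcoc hX hq1 hp1 p₀.2 (φ p₀.2)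
    rwa [hdiff p₀.1 p.1 hp1 hq1] at this
  calc ‖_ + _ + _‖ ≤ ‖_ + _‖ + ‖_‖ := norm_add_le _ _
    _ ≤ ‖_‖ + ‖_‖ + ‖_‖ := add_le_add_left (norm_add_le _ _) _
    _ ≤ β p := by rw [hβ]; dsimp only; rw [h1]; exact add_le_add (add_le_add_right h2 _) h3
end XC

section UPS
variable {H : Type*} [NormedAddCommGroup H] [InnerProductSpace ℂ H] [CompleteSpace H]

lemma norm_AB_le (A B : H →L[ℂ] H) (u : ℝ → ℝ) (r : ℝ) (ψ : H) :
    ‖A ψ + u r • B ψ‖ ≤ aa A B 1 u r * ‖ψ‖ := by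
  have := norm_Lap_le A B (1 : H →L[ℂ] H) u r ψ
  simpa using this

lemma Upsilon_reg (A B : H →L[ℂ] H) {u : ℝ → ℝ} {T : ℝ} (hT : 0 ≤ T)
    (hu : IntervalIntegrable u volume 0 T) (ψ₀ : H) {Υ : ℝ → H}
    (hΥ : ∀ t ∈ Set.Icc (0:ℝ) T,
      Υ t = ψ₀ + ∫ s in (0:ℝ)..t, (A (Υ s) + u s • B (Υ s))) :
    ContinuousOn Υ (Set.Icc 0 T) ∧
      IntervalIntegrable (fun s => A (Υ s) + u s • B (Υ s)) volume 0 T := by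
  classical
  set F : ℝ → H := fun s => A (Υ s) + u s • B (Υ s) with hF
  set ab : ℝ → ℝ := aa A B 1 u with hab
  have habII : IntervalIntegrable ab volume 0 T := aa_II A B (1 : H →L[ℂ] H) hu
  have hab0 : ∀ r, 0 ≤ ab r := aa_nonneg A B 1 u
  have hcont_of_good : ∀ t ∈ Set.Icc (0:ℝ) T, IntervalIntegrable F volume 0 t →
      ContinuousOn Υ (Set.Icc 0 t) := by
    intro t ht hg
    have hprim : ContinuousOn (fun x => ψ₀ + ∫ s in (0:ℝ)..x, F s) (Set.Icc 0 t) := by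
      have := continuousOn_primitive_interval' hg (left_mem_uIcc (a := (0:ℝ)) (b := t))
      rw [uIcc_of_le ht.1] at this
      exact continuousOn_const.add this
    refine hprim.congr ?_
    intro x hx
    exact hΥ x ⟨hx.1, hx.2.trans ht.2⟩
  -- Gronwall constant
  obtain ⟨Q, hQ0, hQ⟩ := my_gronwall hT habII hab0
  set M : ℝ := ‖ψ₀‖ * Q with hM
  have hM0 : 0 ≤ M := mul_nonneg (norm_nonneg _) hQ0
  have hbound_of_good : ∀ t ∈ Set.Icc (0:ℝ) T, IntervalIntegrable F volume 0 t →
      ∀ x ∈ Set.Icc (0:ℝ) t, ‖Υ x‖ ≤ M := by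
    intro t ht hg
    refine hQ ‖ψ₀‖ (norm_nonneg _) t ht (fun x => ‖Υ x‖)
      ((hcont_of_good t ht hg).norm) (fun x _ => norm_nonneg _) ?_
    intro x hx
    have hx' : x ∈ Set.Icc (0:ℝ) T := ⟨hx.1, hx.2.trans ht.2⟩
    have hgx : IntervalIntegrable F volume 0 x :=
      II_sub_interval hg le_rfl hx.1 hx.2
    have hcx : ContinuousOn Υ (Set.Icc 0 x) :=
      (hcont_of_good t ht hg).mono (Icc_subset_Icc le_rfl hx.2)
    have habx : IntervalIntegrable ab volume 0 x :=
      II_sub_interval habII le_rfl hx.1 hx'.2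
    have hbint : IntervalIntegrable (fun r => ab r * ‖Υ r‖) volume 0 x :=
      II_mul_cont hx.1 habx hcx.norm
    have hest : ‖∫ s in (0:ℝ)..x, F s‖ ≤ |∫ s in (0:ℝ)..x, ab s * ‖Υ s‖| := by
      refine intervalIntegral.norm_integral_le_abs_of_norm_le (Filter.Eventually.of_forall ?_) hbint
      intro r
      exact norm_AB_le A B u r (Υ r)
    have habs : |∫ s in (0:ℝ)..x, ab s * ‖Υ s‖| = ∫ s in (0:ℝ)..x, ab s * ‖Υ s‖ :=
      abs_of_nonneg (integral_nonneg hx.1 (fun s _ => mul_nonneg (hab0 s) (norm_nonneg _)))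
    calc ‖Υ x‖ = ‖ψ₀ + ∫ s in (0:ℝ)..x, F s‖ := by rw [← hΥ x hx']
      _ ≤ ‖ψ₀‖ + ‖∫ s in (0:ℝ)..x, F s‖ := norm_add_le _ _
      _ ≤ ‖ψ₀‖ + ∫ s in (0:ℝ)..x, ab s * ‖Υ s‖ := by rw [← habs]; linarith
  -- the set of good times
  set S : Set ℝ := {t | t ∈ Set.Icc (0:ℝ) T ∧ IntervalIntegrable F volume 0 t} with hS
  have h0S : (0:ℝ) ∈ S := ⟨⟨le_rfl, hT⟩, IntervalIntegrable.refl⟩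
  have hSne : S.Nonempty := ⟨0, h0S⟩
  have hSbdd : BddAbove S := ⟨T, fun x hx => hx.1.2⟩
  set σ : ℝ := sSup S with hσdef
  have hσ0 : 0 ≤ σ := le_csSup hSbdd h0S
  have hσT : σ ≤ T := csSup_le hSne (fun x hx => hx.1.2)
  have hgood_lt : ∀ t, 0 ≤ t → t < σ → IntervalIntegrable F volume 0 t := by
    intro t ht htσ
    obtain ⟨x, hxS, htx⟩ := exists_lt_of_lt_csSup hSne htσ
    exact II_sub_interval hxS.2 le_rfl ht htx.le
  have hgoodσ : IntervalIntegrable F volume 0 σ := by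
    rcases eq_or_lt_of_le hσ0 with h | h
    · simpa [← h] using (IntervalIntegrable.refl (μ := volume) (f := F) (a := (0:ℝ)))
    · rw [intervalIntegrable_iff_integrableOn_Ioc_of_le hσ0]
      have hae : (Ioc (0:ℝ) σ : Set ℝ) =ᵐ[volume] (Ioo (0:ℝ) σ : Set ℝ) :=
        (Ioo_ae_eq_Ioc (μ := volume) (a := (0:ℝ)) (b := σ)).symm
      rw [IntegrableOn, Measure.restrict_congr_set hae, ← IntegrableOn]
      have hΥcont : ContinuousOn Υ (Ioo 0 σ) := by
        intro x hx
        set t' : ℝ := (x + σ) / 2 with ht'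
        have hxt' : x < t' := by rw [ht']; linarith [hx.2]
        have ht'σ : t' < σ := by rw [ht']; linarith [hx.2]
        have ht'0 : 0 ≤ t' := by rw [ht']; linarith [hx.1.le, hx.2.le, hσ0]
        have hgt' : IntervalIntegrable F volume 0 t' := hgood_lt t' ht'0 ht'σ
        have hcont := hcont_of_good t' ⟨ht'0, ht'σ.le.trans hσT⟩ hgt'
        have hCA : ContinuousAt Υ x := by
          exact hcont.continuousAt (Filter.mem_of_superset
            (IsOpen.mem_nhds isOpen_Ioo ⟨hx.1, hxt'⟩) Ioo_subset_Icc_self)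
        exact hCA.continuousWithinAt
      have hmble : AEStronglyMeasurable F (volume.restrict (Ioo 0 σ)) := by
        have hΥm : AEStronglyMeasurable Υ (volume.restrict (Ioo 0 σ)) :=
          hΥcont.aestronglyMeasurable measurableSet_Ioo
        have hum : AEStronglyMeasurable u (volume.restrict (Ioo 0 σ)) := by
          have h1 := hu.def'.1
          rw [uIoc_of_le hT] at h1
          exact h1.mono_measure (Measure.restrict_mono
            (Ioo_subset_Ioc_self.trans (Ioc_subset_Ioc le_rfl hσT)) le_rfl)
        exact (A.continuous.comp_aestronglyMeasurable hΥm).add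
          (hum.smul (B.continuous.comp_aestronglyMeasurable hΥm))
      have hdom : Integrable (fun x => ab x * M) (volume.restrict (Ioo 0 σ)) := by
        have h1 := habII.def'
        rw [uIoc_of_le hT] at h1
        exact (h1.mono_set (Ioo_subset_Ioc_self.trans (Ioc_subset_Ioc le_rfl hσT))).mul_const M
      refine hdom.mono' hmble ?_
      filter_upwards [ae_restrict_mem measurableSet_Ioo] with x hx
      have hb : ‖Υ x‖ ≤ M := by
        set t' : ℝ := (x + σ) / 2 with ht'
        have hxt' : x ≤ t' := by rw [ht']; linarith [hx.2]
        have ht'σ : t' < σ := by rw [ht']; linarith [hx.2]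
        have ht'0 : 0 ≤ t' := by rw [ht']; linarith [hx.1.le, hσ0]
        exact hbound_of_good t' ⟨ht'0, ht'σ.le.trans hσT⟩
          (hgood_lt t' ht'0 ht'σ) x ⟨hx.1.le, hxt'⟩
      calc ‖F x‖ ≤ ab x * ‖Υ x‖ := norm_AB_le A B u x (Υ x)
        _ ≤ ab x * M := mul_le_mul_of_nonneg_left hb (hab0 x)
  have hσeq : σ = T := by
    by_contra hne
    have hσlt : σ < T := lt_of_le_of_ne hσT hne
    have hψ : ∀ t ∈ Ioc σ T, Υ t = ψ₀ := by
      intro t ht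
      have htT : t ∈ Set.Icc (0:ℝ) T := ⟨hσ0.trans ht.1.le, ht.2⟩
      have hnotgood : ¬ IntervalIntegrable F volume 0 t := by
        intro hgood
        have : t ≤ σ := le_csSup hSbdd ⟨htT, hgood⟩
        exact absurd ht.1 (not_lt.mpr this)
      rw [hΥ t htT, integral_undef hnotgood, add_zero]
    have hIg : IntegrableOn (fun s => A ψ₀ + u s • B ψ₀) (Ioc σ T) volume := by
      have huσT : IntegrableOn u (Ioc σ T) volume := by
        have := (II_sub_interval hu hσ0 hσT le_rfl).def'
        rwa [uIoc_of_le hσT] at this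
      refine (integrableOn_const (hs := measure_Ioc_lt_top.ne)).add ?_
      exact huσT.smul_const (B ψ₀)
    have hFσT : IntervalIntegrable F volume σ T := by
      rw [intervalIntegrable_iff_integrableOn_Ioc_of_le hσT]
      refine hIg.congr_fun ?_ measurableSet_Ioc
      intro s hs
      rw [hF]
      simp only
      rw [hψ s hs]
    have hgoodT : IntervalIntegrable F volume 0 T := hgoodσ.trans hFσT
    have : T ≤ σ := le_csSup hSbdd ⟨⟨hT, le_rfl⟩, hgoodT⟩
    exact absurd hσlt (not_lt.mpr this)
  have hgoodT : IntervalIntegrable F volume 0 T := by rw [← hσeq]; exact hgoodσ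
  exact ⟨hcont_of_good T ⟨hT, le_rfl⟩ hgoodT, hgoodT⟩

end UPS
set_option linter.unusedSectionVars false
open MeasureTheory Set intervalIntegral Function

/-- Fubini for the triangle `0 ≤ r ≤ ρ ≤ s`. -/
lemma fubini_triangle {E : Type*} [NormedAddCommGroup E] [NormedSpace ℝ E] [CompleteSpace E]
    {s : ℝ} (hs : 0 ≤ s) {Φ : ℝ → ℝ → E}
    (hmeas : AEStronglyMeasurable (fun p : ℝ × ℝ => Φ p.1 p.2)
      ((volume.restrict (Ioc 0 s)).prod (volume.restrict (Ioc 0 s))))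
    {b₁ b₂ : ℝ → ℝ}
    (hb₁ : IntegrableOn b₁ (Ioc 0 s) volume) (hb₂ : IntegrableOn b₂ (Ioc 0 s) volume)
    (hbound : ∀ ρ ∈ Ioc (0:ℝ) s, ∀ r ∈ Ioc (0:ℝ) s, ‖Φ ρ r‖ ≤ b₁ ρ * b₂ r) :
    (∫ r in (0:ℝ)..s, (∫ ρ in r..s, Φ ρ r)) = ∫ ρ in (0:ℝ)..s, (∫ r in (0:ℝ)..ρ, Φ ρ r) := by
  set μs := volume.restrict (Ioc (0:ℝ) s) with hμs
  set f : ℝ → ℝ → E := fun r ρ => (Ioc r s).indicator (fun ρ' => Φ ρ' r) ρ with hf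
  have hSmeas : MeasurableSet {p : ℝ × ℝ | p.2 ∈ Ioc p.1 s} := by
    have h1 : MeasurableSet {p : ℝ × ℝ | p.1 < p.2} :=
      measurableSet_lt measurable_fst measurable_snd
    have h2 : MeasurableSet {p : ℝ × ℝ | p.2 ≤ s} := measurable_snd measurableSet_Iic
    exact h1.inter h2
  have huncurry : uncurry f = Set.indicator {p : ℝ × ℝ | p.2 ∈ Ioc p.1 s}
      (fun p => Φ p.2 p.1) := by
    funext p
    simp only [uncurry, hf, Set.indicator_apply, Set.mem_setOf_eq]
  have hWmeas : AEStronglyMeasurable (fun p : ℝ × ℝ => Φ p.2 p.1) (μs.prod μs) :=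
    hmeas.comp_quasiMeasurePreserving
      (Measure.measurePreserving_swap (μ := μs) (ν := μs)).quasiMeasurePreserving
  have hinteg : Integrable (uncurry f) (μs.prod μs) := by
    rw [huncurry]
    have hdom : Integrable (fun p : ℝ × ℝ => b₂ p.1 * b₁ p.2) (μs.prod μs) :=
      Integrable.mul_prod hb₂ hb₁
    refine hdom.mono' (hWmeas.indicator hSmeas) ?_
    have hprodset : ∀ᵐ p ∂(μs.prod μs), p ∈ Ioc (0:ℝ) s ×ˢ Ioc (0:ℝ) s := by
      rw [hμs, Measure.prod_restrict]
      exact ae_restrict_mem (measurableSet_Ioc.prod measurableSet_Ioc)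
    filter_upwards [hprodset] with p hp
    calc ‖Set.indicator {p : ℝ × ℝ | p.2 ∈ Ioc p.1 s} (fun p => Φ p.2 p.1) p‖
        ≤ ‖Φ p.2 p.1‖ := norm_indicator_le_norm_self _ _
      _ ≤ b₁ p.2 * b₂ p.1 := hbound p.2 hp.2 p.1 hp.1
      _ = b₂ p.1 * b₁ p.2 := mul_comm _ _
  have hLHS : (∫ r in (0:ℝ)..s, (∫ ρ in r..s, Φ ρ r)) = ∫ r, (∫ ρ, f r ρ ∂μs) ∂μs := by
    rw [integral_of_le hs]
    refine setIntegral_congr_fun measurableSet_Ioc ?_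
    intro r hr
    dsimp only
    rw [integral_of_le hr.2]
    simp only [hf]
    rw [hμs, setIntegral_indicator measurableSet_Ioc]
    congr 1
    rw [Set.Ioc_inter_Ioc, max_eq_right hr.1.le, min_self]
  have hRHS : (∫ ρ in (0:ℝ)..s, (∫ r in (0:ℝ)..ρ, Φ ρ r)) = ∫ ρ, (∫ r, f r ρ ∂μs) ∂μs := by
    rw [integral_of_le hs]
    refine setIntegral_congr_fun measurableSet_Ioc ?_
    intro ρ hρ
    dsimp only
    have hstep : ∀ r : ℝ, f r ρ = (Iio ρ).indicator (fun r' => Φ ρ r') r := by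
      intro r
      by_cases hrρ : r < ρ <;>
        simp [hf, Set.indicator_apply, hrρ, hρ.2]
    have hset : Ioc (0:ℝ) s ∩ Iio ρ = Ioo 0 ρ := by
      ext r
      constructor
      · rintro ⟨⟨h1, _⟩, h3⟩; exact ⟨h1, h3⟩
      · rintro ⟨h1, h2⟩; exact ⟨⟨h1, (le_of_lt h2).trans hρ.2⟩, h2⟩
    rw [integral_of_le hρ.1.le, integral_Ioc_eq_integral_Ioo]
    simp_rw [hstep]
    rw [hμs, setIntegral_indicator measurableSet_Iio, hset]
  rw [hLHS, hRHS]
  exact integral_integral_swap hinteg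

section MAIN
variable {H : Type*} [NormedAddCommGroup H] [InnerProductSpace ℂ H] [CompleteSpace H]

open MeasureTheory in
theorem stmt8_aux
    (A B : H →L[ℂ] H) (u : ℝ → ℝ) (T : ℝ) (hT : 0 ≤ T)
    (hu : IntervalIntegrable u volume 0 T)
    (P : H →L[ℂ] H) (hP1 : P ∘L P = P)
    (hPA : P ∘L A = A ∘L P)
    (ψ₀ : H) (Υ : ℝ → H)
    (hΥ : ∀ t ∈ Set.Icc (0:ℝ) T,
      Υ t = ψ₀ + ∫ s in (0:ℝ)..t, (A (Υ s) + u s • B (Υ s)))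
    (X : ℝ → ℝ → (H →L[ℂ] H))
    (hXunit : ∀ t s : ℝ, ∀ ψ : H, ‖X t s ψ‖ = ‖ψ‖)
    (hXcoc : ∀ t s r : ℝ, (X t s) ∘L (X s r) = X t r)
    (hX : ∀ s : ℝ, ∀ ψ : H, ∀ t ∈ Set.Icc (0:ℝ) T,
      X t s ψ = ψ + ∫ r in s..t,
        ((P ∘L A ∘L P) (X r s ψ) + u r • (P ∘L B ∘L P) (X r s ψ))) :
    ∀ t ∈ Set.Icc (0:ℝ) T,
      P (Υ t) = X t 0 (P ψ₀)
        + ∫ s in (0:ℝ)..t, u s • (X t s ((P ∘L B ∘L (1 - P)) (Υ s))) := by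
  classical
  have h0T : (0:ℝ) ∈ Set.Icc (0:ℝ) T := ⟨le_rfl, hT⟩
  obtain ⟨hΥcont, hFII⟩ := Upsilon_reg A B hT hu ψ₀ hΥ
  set gt : ℝ → H := fun s => (P ∘L B ∘L (1 - P)) (Υ s) with hgt
  have hgtcont : ContinuousOn gt (Set.Icc 0 T) :=
    (P ∘L B ∘L (1 - P)).continuous.comp_continuousOn hΥcont
  obtain ⟨G, hG⟩ := isCompact_Icc.exists_bound_of_continuousOn hgtcont
  have hG0 : 0 ≤ G := le_trans (norm_nonneg (gt 0)) (hG 0 h0T)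
  have hu0s : ∀ s ∈ Set.Icc (0:ℝ) T, IntervalIntegrable u volume 0 s :=
    fun s hs => II_sub_interval hu le_rfl hs.1 hs.2
  have hIccsub : ∀ {p q : ℝ}, p ∈ Set.Icc (0:ℝ) T → q ∈ Set.Icc (0:ℝ) T →
      Set.uIoc p q ⊆ Set.Icc (0:ℝ) T := by
    intro p q hp hq
    refine subset_trans Set.Ioc_subset_Icc_self ?_
    refine subset_trans ?_ (by rw [Set.uIcc_of_le hT] :
      Set.uIcc (0:ℝ) T ⊆ Set.Icc (0:ℝ) T)
    exact Set.uIcc_subset_uIcc (by rw [Set.uIcc_of_le hT]; exact hp)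
      (by rw [Set.uIcc_of_le hT]; exact hq)
  -- the compressed generator
  set Lop : ℝ → H →L[ℂ] H := fun ρ => P ∘L A ∘L P + u ρ • (P ∘L B ∘L P) with hLop
  have hLop_apply : ∀ ρ (v : H), Lop ρ v = (P ∘L A ∘L P) v + u ρ • (P ∘L B ∘L P) v := by
    intro ρ v
    simp [hLop, ContinuousLinearMap.add_apply, ContinuousLinearMap.smul_apply]
  have hLop_norm : ∀ ρ (v : H), ‖Lop ρ v‖ ≤ aa A B P u ρ * ‖v‖ := by
    intro ρ v
    rw [hLop_apply]
    exact norm_Lap_le A B P u ρ v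
  have hX' : ∀ s : ℝ, ∀ ψ : H, ∀ t ∈ Set.Icc (0:ℝ) T,
      X t s ψ = ψ + ∫ r in s..t, Lop r (X r s ψ) := by
    intro s ψ t ht
    have hfe : (fun r => (P ∘L A ∘L P) (X r s ψ) + u r • (P ∘L B ∘L P) (X r s ψ))
        = fun r => Lop r (X r s ψ) := funext fun r => (hLop_apply r _).symm
    rw [hX s ψ t ht, hfe]
  -- continuity machinery
  have hXsnd : ∀ {φ : ℝ → H}, ContinuousOn φ (Set.Icc 0 T) → ∀ t ∈ Set.Icc (0:ℝ) T,
      ContinuousOn (fun r => X t r (φ r)) (Set.Icc 0 T) := by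
    intro φ hφ t ht
    exact (X_joint_cont hT hu hXunit hXcoc hX hφ).comp
      (continuous_const.prodMk continuous_id).continuousOn
      (fun r hr => Set.mk_mem_prod ht hr)
  have hX0cont : ContinuousOn (fun ρ => X ρ 0 (P ψ₀)) (Set.Icc 0 T) := by
    exact (X_joint_cont hT hu hXunit hXcoc hX
        (continuousOn_const (c := P ψ₀))).comp
      (continuous_id.prodMk continuous_const).continuousOn
      (fun ρ hρ => Set.mk_mem_prod hρ h0T)
  -- definitions
  set m : ℝ → H := fun s => ∫ r in (0:ℝ)..s, u r • X s r (gt r) with hm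
  set q : ℝ → H := fun s => X s 0 (P ψ₀) + m s with hq
  have hIInt : ∀ s ∈ Set.Icc (0:ℝ) T,
      IntervalIntegrable (fun r => u r • X s r (gt r)) volume 0 s :=
    fun s hs => II_smul_cont hs.1 (hu0s s hs)
      ((hXsnd hgtcont s hs).mono (Set.Icc_subset_Icc le_rfl hs.2))
  -- primitives
  set A0 : ℝ → ℝ := fun t => ∫ r in (0:ℝ)..t, aa A B P u r with hA0
  set U0 : ℝ → ℝ := fun t => ∫ r in (0:ℝ)..t, |u r| * G with hU0
  have haaT : IntervalIntegrable (aa A B P u) volume 0 T := aa_II A B P hu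
  have hUT : IntervalIntegrable (fun r => |u r| * G) volume 0 T := hu.abs.mul_const G
  have hA0cont : ContinuousOn A0 (Set.Icc 0 T) := by
    have := intervalIntegral.continuousOn_primitive_interval'
      haaT (Set.left_mem_uIcc (a := (0:ℝ)) (b := T))
    rwa [Set.uIcc_of_le hT] at this
  have hU0cont : ContinuousOn U0 (Set.Icc 0 T) := by
    have := intervalIntegral.continuousOn_primitive_interval'
      hUT (Set.left_mem_uIcc (a := (0:ℝ)) (b := T))
    rwa [Set.uIcc_of_le hT] at this
  have hA0diff : ∀ {p q : ℝ}, p ∈ Set.Icc (0:ℝ) T → q ∈ Set.Icc (0:ℝ) T →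
      (∫ r in p..q, aa A B P u r) = A0 q - A0 p := by
    intro p q hp hq
    rw [hA0]
    exact (intervalIntegral.integral_interval_sub_left
      (II_range hT haaT h0T hq) (II_range hT haaT h0T hp)).symm
  have hU0diff : ∀ {p q : ℝ}, p ∈ Set.Icc (0:ℝ) T → q ∈ Set.Icc (0:ℝ) T →
      (∫ r in p..q, |u r| * G) = U0 q - U0 p := by
    intro p q hp hq
    rw [hU0]
    exact (intervalIntegral.integral_interval_sub_left
      (II_range hT hUT h0T hq) (II_range hT hUT h0T hp)).symm
  -- continuity of m
  have hm_cont : ContinuousOn m (Set.Icc 0 T) := by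
    intro s₀ hs₀
    have key : ∀ s ∈ Set.Icc (0:ℝ) T,
        ‖m s - m s₀‖ ≤ U0 s₀ * |A0 s - A0 s₀| + |U0 s - U0 s₀| := by
      intro s hs
      have I_s_all : IntervalIntegrable (fun r => u r • X s r (gt r)) volume 0 T :=
        II_smul_cont hT hu (hXsnd hgtcont s hs)
      have I_s0_all : IntervalIntegrable (fun r => u r • X s₀ r (gt r)) volume 0 T :=
        II_smul_cont hT hu (hXsnd hgtcont s₀ hs₀)
      have I1 : IntervalIntegrable (fun r => u r • X s r (gt r)) volume 0 s₀ :=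
        II_range hT I_s_all h0T hs₀
      have I1' : IntervalIntegrable (fun r => u r • X s₀ r (gt r)) volume 0 s₀ :=
        II_range hT I_s0_all h0T hs₀
      have I2 : IntervalIntegrable (fun r => u r • X s r (gt r)) volume s₀ s :=
        II_range hT I_s_all hs₀ hs
      have hsplit : m s = (∫ r in (0:ℝ)..s₀, u r • X s r (gt r))
          + ∫ r in s₀..s, u r • X s r (gt r) := by
        rw [hm]
        exact (intervalIntegral.integral_add_adjacent_intervals I1 I2).symm
      have hfirst : (∫ r in (0:ℝ)..s₀, u r • X s r (gt r)) - m s₀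
          = ∫ r in (0:ℝ)..s₀, (u r • X s r (gt r) - u r • X s₀ r (gt r)) := by
        rw [hm]
        exact (intervalIntegral.integral_sub I1 I1').symm
      have hb1 : ‖∫ r in (0:ℝ)..s₀, (u r • X s r (gt r) - u r • X s₀ r (gt r))‖
          ≤ U0 s₀ * |A0 s - A0 s₀| := by
        have hgle : IntervalIntegrable (fun r => |u r| * G * |A0 s - A0 s₀|) volume 0 s₀ :=
          ((hu0s s₀ hs₀).abs.mul_const G).mul_const _
        have hbnd := intervalIntegral.norm_integral_le_abs_of_norm_le (μ := volume)
          (a := (0:ℝ)) (b := s₀)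
          (f := fun r => u r • X s r (gt r) - u r • X s₀ r (gt r))
          (g := fun r => |u r| * G * |A0 s - A0 s₀|) ?_ hgle
        · have heq2 : (∫ r in (0:ℝ)..s₀, |u r| * G * |A0 s - A0 s₀|)
              = U0 s₀ * |A0 s - A0 s₀| := by
            rw [intervalIntegral.integral_mul_const, hU0]
          rw [heq2] at hbnd
          refine le_trans hbnd ?_
          rw [abs_of_nonneg]
          exact mul_nonneg (by
            rw [hU0]
            exact intervalIntegral.integral_nonneg hs₀.1
              (fun r _ => mul_nonneg (abs_nonneg _) hG0)) (abs_nonneg _)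
        · filter_upwards [ae_restrict_mem measurableSet_uIoc] with r hr
          have hrT : r ∈ Set.Icc (0:ℝ) T := hIccsub h0T hs₀ hr
          rw [← smul_sub, norm_smul, Real.norm_eq_abs]
          have hXd := X_fst hT hu hXunit hXcoc hX hs hs₀ r (gt r)
          rw [hA0diff hs₀ hs] at hXd
          calc |u r| * ‖X s r (gt r) - X s₀ r (gt r)‖
              ≤ |u r| * (‖gt r‖ * |A0 s - A0 s₀|) :=
                mul_le_mul_of_nonneg_left hXd (abs_nonneg _)
            _ ≤ |u r| * (G * |A0 s - A0 s₀|) :=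
                mul_le_mul_of_nonneg_left
                  (mul_le_mul_of_nonneg_right (hG r hrT) (abs_nonneg _)) (abs_nonneg _)
            _ = |u r| * G * |A0 s - A0 s₀| := by ring
      have hb2 : ‖∫ r in s₀..s, u r • X s r (gt r)‖ ≤ |U0 s - U0 s₀| := by
        have hgle : IntervalIntegrable (fun r => |u r| * G) volume s₀ s :=
          II_range hT hUT hs₀ hs
        have hbnd := intervalIntegral.norm_integral_le_abs_of_norm_le (μ := volume)
          (a := s₀) (b := s) (f := fun r => u r • X s r (gt r))
          (g := fun r => |u r| * G) ?_ hgle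
        · rwa [hU0diff hs₀ hs] at hbnd
        · filter_upwards [ae_restrict_mem measurableSet_uIoc] with r hr
          have hrT : r ∈ Set.Icc (0:ℝ) T := hIccsub hs₀ hs hr
          rw [norm_smul, Real.norm_eq_abs, hXunit]
          exact mul_le_mul_of_nonneg_left (hG r hrT) (abs_nonneg _)
      have hdecomp : m s - m s₀
          = (∫ r in (0:ℝ)..s₀, (u r • X s r (gt r) - u r • X s₀ r (gt r)))
            + ∫ r in s₀..s, u r • X s r (gt r) := by
        rw [← hfirst, hsplit]; abel
      calc ‖m s - m s₀‖ ≤ ‖∫ r in (0:ℝ)..s₀, (u r • X s r (gt r) - u r • X s₀ r (gt r))‖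
            + ‖∫ r in s₀..s, u r • X s r (gt r)‖ := by rw [hdecomp]; exact norm_add_le _ _
        _ ≤ U0 s₀ * |A0 s - A0 s₀| + |U0 s - U0 s₀| := add_le_add hb1 hb2
    -- squeeze
    set β : ℝ → ℝ := fun s => U0 s₀ * |A0 s - A0 s₀| + |U0 s - U0 s₀| with hβ
    have hβcont : ContinuousWithinAt β (Set.Icc 0 T) s₀ :=
      ((continuousOn_const.mul ((hA0cont.sub continuousOn_const).abs)).add
        ((hU0cont.sub continuousOn_const).abs)) s₀ hs₀
    have hβ0 : β s₀ = 0 := by simp [hβ]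
    have hβt : Filter.Tendsto β (nhdsWithin s₀ (Set.Icc 0 T)) (nhds 0) := by
      have := hβcont.tendsto; rwa [hβ0] at this
    rw [ContinuousWithinAt, tendsto_iff_norm_sub_tendsto_zero]
    refine squeeze_zero' (Filter.Eventually.of_forall (fun p => norm_nonneg _)) ?_ hβt
    filter_upwards [self_mem_nhdsWithin] with s hs
    exact key s hs
  have hq_cont : ContinuousOn q (Set.Icc 0 T) := hX0cont.add hm_cont
  -- interval integrability of Lop-type integrands
  have II_Lop : ∀ {w : ℝ → H}, ContinuousOn w (Set.Icc 0 T) → ∀ s ∈ Set.Icc (0:ℝ) T,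
      IntervalIntegrable (fun ρ => Lop ρ (w ρ)) volume 0 s := by
    intro w hw s hs
    have h1 : IntervalIntegrable (fun ρ => (P ∘L A ∘L P) (w ρ)) volume 0 s := by
      refine ContinuousOn.intervalIntegrable ?_
      rw [Set.uIcc_of_le hs.1]
      exact ((P ∘L A ∘L P).continuous.comp_continuousOn
        (hw.mono (Set.Icc_subset_Icc le_rfl hs.2)))
    have h2 : IntervalIntegrable (fun ρ => u ρ • (P ∘L B ∘L P) (w ρ)) volume 0 s :=
      II_smul_cont hs.1 (hu0s s hs)
        ((P ∘L B ∘L P).continuous.comp_continuousOn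
          (hw.mono (Set.Icc_subset_Icc le_rfl hs.2)))
    have := h1.add h2
    refine this.congr_ae ?_
    filter_upwards with ρ using (hLop_apply ρ (w ρ)).symm
  -- Volterra equation for m (Fubini step)
  set Φ : ℝ → ℝ → H := fun ρ r => u r • Lop ρ (X ρ r (gt r)) with hΦ
  have hm_eq : ∀ s ∈ Set.Icc (0:ℝ) T, m s = (∫ r in (0:ℝ)..s, u r • gt r)
      + ∫ ρ in (0:ℝ)..s, Lop ρ (m ρ) := by
    intro s hs
    have hs0 := hs.1
    have hIocsub : Set.Ioc (0:ℝ) s ⊆ Set.Icc (0:ℝ) T :=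
      fun x hx => ⟨hx.1.le, hx.2.trans hs.2⟩
    have I_all : IntervalIntegrable (fun r => u r • X s r (gt r)) volume 0 s := hIInt s hs
    have I_A : IntervalIntegrable (fun r => u r • gt r) volume 0 s :=
      II_smul_cont hs0 (hu0s s hs) (hgtcont.mono (Set.Icc_subset_Icc le_rfl hs.2))
    have hstep1 : m s - (∫ r in (0:ℝ)..s, u r • gt r)
        = ∫ r in (0:ℝ)..s, (u r • X s r (gt r) - u r • gt r) := by
      rw [hm]
      exact (intervalIntegral.integral_sub I_all I_A).symm
    have hstep2 : (∫ r in (0:ℝ)..s, (u r • X s r (gt r) - u r • gt r))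
        = ∫ r in (0:ℝ)..s, (∫ ρ in r..s, Φ ρ r) := by
      refine intervalIntegral.integral_congr ?_
      intro r _
      dsimp only
      rw [← smul_sub]
      have hXr : X s r (gt r) - gt r = ∫ ρ in r..s, Lop ρ (X ρ r (gt r)) := by
        rw [hX' r (gt r) s hs]; abel
      rw [hXr, ← intervalIntegral.integral_smul]
    -- Fubini
    have hJc := X_joint_cont hT hu hXunit hXcoc hX hgtcont
    have hJm : AEStronglyMeasurable (fun p : ℝ × ℝ => X p.1 p.2 (gt p.2))
        ((volume.restrict (Set.Ioc 0 s)).prod (volume.restrict (Set.Ioc 0 s))) := by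
      have base : AEStronglyMeasurable (fun p : ℝ × ℝ => X p.1 p.2 (gt p.2))
          ((volume.prod volume).restrict (Set.Icc 0 T ×ˢ Set.Icc 0 T)) :=
        hJc.aestronglyMeasurable (measurableSet_Icc.prod measurableSet_Icc)
      rw [Measure.prod_restrict]
      exact base.mono_measure (Measure.restrict_mono (Set.prod_mono hIocsub hIocsub) le_rfl)
    have hum : AEStronglyMeasurable u (volume.restrict (Set.Ioc 0 s)) := by
      have := (hu0s s hs).def'.1
      rwa [Set.uIoc_of_le hs0] at this
    have hu1 : AEStronglyMeasurable (fun p : ℝ × ℝ => u p.1)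
        ((volume.restrict (Set.Ioc 0 s)).prod (volume.restrict (Set.Ioc 0 s))) :=
      hum.comp_quasiMeasurePreserving Measure.quasiMeasurePreserving_fst
    have hu2 : AEStronglyMeasurable (fun p : ℝ × ℝ => u p.2)
        ((volume.restrict (Set.Ioc 0 s)).prod (volume.restrict (Set.Ioc 0 s))) :=
      hum.comp_quasiMeasurePreserving Measure.quasiMeasurePreserving_snd
    have hform : (fun p : ℝ × ℝ => Φ p.1 p.2)
        = fun p : ℝ × ℝ => u p.2 • (P ∘L A ∘L P) (X p.1 p.2 (gt p.2))
          + (u p.2 * u p.1) • (P ∘L B ∘L P) (X p.1 p.2 (gt p.2)) := by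
      funext p
      rw [hΦ]
      dsimp only
      rw [hLop_apply, smul_add, smul_smul]
    have hmeas : AEStronglyMeasurable (fun p : ℝ × ℝ => Φ p.1 p.2)
        ((volume.restrict (Set.Ioc 0 s)).prod (volume.restrict (Set.Ioc 0 s))) := by
      rw [hform]
      exact (hu2.smul ((P ∘L A ∘L P).continuous.comp_aestronglyMeasurable hJm)).add
        ((hu2.mul hu1).smul ((P ∘L B ∘L P).continuous.comp_aestronglyMeasurable hJm))
    have hb₁ : IntegrableOn (aa A B P u) (Set.Ioc 0 s) volume := by
      have := (II_range hT haaT h0T hs).def'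
      rwa [Set.uIoc_of_le hs0] at this
    have hb₂ : IntegrableOn (fun r => |u r| * G) (Set.Ioc 0 s) volume := by
      have := (II_range hT hUT h0T hs).def'
      rwa [Set.uIoc_of_le hs0] at this
    have hbound : ∀ ρ ∈ Set.Ioc (0:ℝ) s, ∀ r ∈ Set.Ioc (0:ℝ) s,
        ‖Φ ρ r‖ ≤ aa A B P u ρ * (|u r| * G) := by
      intro ρ hρ r hr
      rw [hΦ]
      dsimp only
      rw [norm_smul, Real.norm_eq_abs]
      calc |u r| * ‖Lop ρ (X ρ r (gt r))‖
          ≤ |u r| * (aa A B P u ρ * ‖X ρ r (gt r)‖) :=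
            mul_le_mul_of_nonneg_left (hLop_norm ρ _) (abs_nonneg _)
        _ = |u r| * (aa A B P u ρ * ‖gt r‖) := by rw [hXunit]
        _ ≤ |u r| * (aa A B P u ρ * G) :=
            mul_le_mul_of_nonneg_left
              (mul_le_mul_of_nonneg_left (hG r (hIocsub hr)) (aa_nonneg A B P u ρ))
              (abs_nonneg _)
        _ = aa A B P u ρ * (|u r| * G) := by ring
    have hstep3 : (∫ r in (0:ℝ)..s, (∫ ρ in r..s, Φ ρ r))
        = ∫ ρ in (0:ℝ)..s, (∫ r in (0:ℝ)..ρ, Φ ρ r) :=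
      fubini_triangle hs0 hmeas hb₁ hb₂ hbound
    have hstep4 : (∫ ρ in (0:ℝ)..s, (∫ r in (0:ℝ)..ρ, Φ ρ r))
        = ∫ ρ in (0:ℝ)..s, Lop ρ (m ρ) := by
      refine intervalIntegral.integral_congr ?_
      intro ρ hρ
      rw [Set.uIcc_of_le hs0] at hρ
      dsimp only
      have hρT : ρ ∈ Set.Icc (0:ℝ) T := ⟨hρ.1, hρ.2.trans hs.2⟩
      have hpt : (fun r => Φ ρ r) = fun r => Lop ρ (u r • X ρ r (gt r)) := by
        funext r
        rw [hΦ]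
        dsimp only
        exact ((Lop ρ).map_smul_of_tower (u r) _).symm
      rw [hpt, (Lop ρ).intervalIntegral_comp_comm (hIInt ρ hρT)]
    have := hstep1.trans (hstep2.trans (hstep3.trans hstep4))
    exact sub_eq_iff_eq_add'.mp this
  -- Volterra equation for q
  have hq_eq : ∀ s ∈ Set.Icc (0:ℝ) T,
      q s = P ψ₀ + ∫ ρ in (0:ℝ)..s, (Lop ρ (q ρ) + u ρ • gt ρ) := by
    intro s hs
    have Ia : IntervalIntegrable (fun ρ => Lop ρ (X ρ 0 (P ψ₀))) volume 0 s :=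
      II_Lop hX0cont s hs
    have Ib : IntervalIntegrable (fun ρ => Lop ρ (m ρ)) volume 0 s :=
      II_Lop hm_cont s hs
    have Ic : IntervalIntegrable (fun ρ => u ρ • gt ρ) volume 0 s :=
      II_smul_cont hs.1 (hu0s s hs) (hgtcont.mono (Set.Icc_subset_Icc le_rfl hs.2))
    have hcongr : (∫ ρ in (0:ℝ)..s, (Lop ρ (q ρ) + u ρ • gt ρ))
        = ∫ ρ in (0:ℝ)..s, (Lop ρ (X ρ 0 (P ψ₀)) + Lop ρ (m ρ) + u ρ • gt ρ) := by
      refine intervalIntegral.integral_congr ?_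
      intro ρ _
      rw [hq]
      dsimp only
      rw [map_add]
    rw [hcongr, intervalIntegral.integral_add (Ia.add Ib) Ic,
      intervalIntegral.integral_add Ia Ib]
    have h1 := hX' 0 (P ψ₀) s hs
    have h2 := hm_eq s hs
    rw [hq]
    dsimp only
    rw [h1, h2]
    abel
  -- Volterra equation for P ∘ Υ
  have hPP : ∀ w : H, P (P w) = P w := by
    intro w
    have := ContinuousLinearMap.ext_iff.mp hP1 w
    simpa using this
  have hPA' : ∀ w : H, P (A w) = A (P w) := by
    intro w
    have := ContinuousLinearMap.ext_iff.mp hPA w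
    simpa using this
  have hf1_eq : ∀ s ∈ Set.Icc (0:ℝ) T,
      P (Υ s) = P ψ₀ + ∫ ρ in (0:ℝ)..s, (Lop ρ (P (Υ ρ)) + u ρ • gt ρ) := by
    intro s hs
    have hFs : IntervalIntegrable (fun r => A (Υ r) + u r • B (Υ r)) volume 0 s :=
      II_range hT hFII h0T hs
    have hmain : P (Υ s) = P ψ₀ + ∫ ρ in (0:ℝ)..s, P (A (Υ ρ) + u ρ • B (Υ ρ)) := by
      rw [hΥ s hs, map_add, P.intervalIntegral_comp_comm hFs]
    rw [hmain]
    congr 1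
    refine intervalIntegral.integral_congr ?_
    intro ρ _
    dsimp only
    rw [hLop_apply, hgt]
    dsimp only
    set v := Υ ρ
    rw [map_add, P.map_smul_of_tower]
    simp only [ContinuousLinearMap.comp_apply, ContinuousLinearMap.sub_apply,
      ContinuousLinearMap.one_apply, map_sub]
    rw [hPP v, hPA' (P v), hPP v]
    rw [smul_sub, ← hPA' v]
    abel
  -- Gronwall conclusion
  set δf : ℝ → ℝ := fun s => ‖P (Υ s) - q s‖ with hδf
  have hδcont : ContinuousOn δf (Set.Icc 0 T) :=
    ((P.continuous.comp_continuousOn hΥcont).sub hq_cont).norm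
  have hPΥcont : ContinuousOn (fun s => P (Υ s)) (Set.Icc 0 T) :=
    P.continuous.comp_continuousOn hΥcont
  have hsub : ∀ s ∈ Set.Icc (0:ℝ) T,
      P (Υ s) - q s = ∫ ρ in (0:ℝ)..s, Lop ρ (P (Υ ρ) - q ρ) := by
    intro s hs
    have I₁ : IntervalIntegrable (fun ρ => Lop ρ (P (Υ ρ))) volume 0 s :=
      II_Lop hPΥcont s hs
    have I₂ : IntervalIntegrable (fun ρ => Lop ρ (q ρ)) volume 0 s :=
      II_Lop hq_cont s hs
    have Ic : IntervalIntegrable (fun ρ => u ρ • gt ρ) volume 0 s :=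
      II_smul_cont hs.1 (hu0s s hs) (hgtcont.mono (Set.Icc_subset_Icc le_rfl hs.2))
    rw [hf1_eq s hs, hq_eq s hs]
    have hstepA : (P ψ₀ + ∫ ρ in (0:ℝ)..s, (Lop ρ (P (Υ ρ)) + u ρ • gt ρ))
        - (P ψ₀ + ∫ ρ in (0:ℝ)..s, (Lop ρ (q ρ) + u ρ • gt ρ))
        = (∫ ρ in (0:ℝ)..s, (Lop ρ (P (Υ ρ)) + u ρ • gt ρ))
          - ∫ ρ in (0:ℝ)..s, (Lop ρ (q ρ) + u ρ • gt ρ) := by abel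
    rw [hstepA, ← intervalIntegral.integral_sub (I₁.add Ic) (I₂.add Ic)]
    refine intervalIntegral.integral_congr ?_
    intro ρ _
    dsimp only
    rw [map_sub]
    abel
  obtain ⟨Q, hQ0, hQ⟩ := my_gronwall hT haaT (aa_nonneg A B P u)
  have hδzero : ∀ t ∈ Set.Icc (0:ℝ) T, δf t = 0 := by
    intro t ht
    have hδle : ∀ s ∈ Set.Icc (0:ℝ) T, δf s ≤ 0 + ∫ ρ in (0:ℝ)..s, aa A B P u ρ * δf ρ := by
      intro s hs
      rw [zero_add, hδf]
      dsimp only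
      rw [hsub s hs]
      have hbII : IntervalIntegrable (fun ρ => aa A B P u ρ * δf ρ) volume 0 s :=
        II_mul_cont hs.1 (II_range hT haaT h0T hs)
          ((hδcont.mono (Set.Icc_subset_Icc le_rfl hs.2)))
      have hbnd := intervalIntegral.norm_integral_le_abs_of_norm_le (μ := volume)
        (a := (0:ℝ)) (b := s) (f := fun ρ => Lop ρ (P (Υ ρ) - q ρ))
        (g := fun ρ => aa A B P u ρ * δf ρ)
        (Filter.Eventually.of_forall (fun ρ => hLop_norm ρ _)) hbII
      refine le_trans hbnd ?_
      rw [abs_of_nonneg (intervalIntegral.integral_nonneg hs.1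
        (fun ρ _ => mul_nonneg (aa_nonneg A B P u ρ) (norm_nonneg _)))]
    have := hQ 0 le_rfl T ⟨hT, le_rfl⟩ δf hδcont (fun s _ => norm_nonneg _) hδle t ht
    rw [zero_mul] at this
    exact le_antisymm this (norm_nonneg _)
  intro t ht
  have hzt := hδzero t ht
  rw [hδf] at hzt
  dsimp only at hzt
  have := sub_eq_zero.mp (norm_eq_zero.mp hzt)
  rw [hq, hm, hgt] at this
  dsimp only at this
  exact this
end MAIN



open MeasureTheory in
/-- Variation-of-constants formula relating the full dynamics `ψ' = (A + u B)ψ` to its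
Galerkin approximation: `π_N Υ_t ψ₀ = X(t,0)π_N ψ₀ + ∫₀ᵗ u(s) X(t,s) π_N B (Id − π_N) Υ_s ψ₀ ds`. -/
theorem stmt8 {H : Type*} [NormedAddCommGroup H] [InnerProductSpace ℂ H] [CompleteSpace H]
    (A B : H →L[ℂ] H) (u : ℝ → ℝ) (T : ℝ) (hT : 0 ≤ T)
    (hu : IntervalIntegrable u volume 0 T)
    (P : H →L[ℂ] H) (hP1 : P ∘L P = P) (hP2 : ContinuousLinearMap.adjoint P = P)
    (hPA : P ∘L A = A ∘L P)
    (ψ₀ : H) (Υ : ℝ → H)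
    (hΥ : ∀ t ∈ Set.Icc (0:ℝ) T,
      Υ t = ψ₀ + ∫ s in (0:ℝ)..t, (A (Υ s) + u s • B (Υ s)))
    (X : ℝ → ℝ → (H →L[ℂ] H))
    (hXunit : ∀ t s : ℝ, ∀ ψ : H, ‖X t s ψ‖ = ‖ψ‖)
    (hXcoc : ∀ t s r : ℝ, (X t s) ∘L (X s r) = X t r)
    (hXid : ∀ t : ℝ, X t t = 1)
    (hX : ∀ s : ℝ, ∀ ψ : H, ∀ t ∈ Set.Icc (0:ℝ) T,
      X t s ψ = ψ + ∫ r in s..t,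
        ((P ∘L A ∘L P) (X r s ψ) + u r • (P ∘L B ∘L P) (X r s ψ))) :
    ∀ t ∈ Set.Icc (0:ℝ) T,
      P (Υ t) = X t 0 (P ψ₀)
        + ∫ s in (0:ℝ)..t, u s • (X t s ((P ∘L B ∘L (1 - P)) (Υ s))) := by
  exact stmt8_aux A B u T hT hu P hP1 hPA ψ₀ Υ hΥ X hXunit hXcoc hX
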